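/- arXiv:2010.13032 — 3 statements merged into one kernel-verified Lean document; each statement's English description precedes it below -/
import Mathlib

section
/- Let f : ℝ^d → ℝ be m-strongly convex with L-Lipschitz gradient and global minimizer θ*. Let g be a random vector with 𝔼[g] = ∇f(θ) and 𝔼[‖g‖²] ≤ σ² + c‖∇f(θ)‖² with c ≥ 1 and σ ≥ 0. Then for any step size μ ∈ (0, 1/(Lc)] and θ⁺ = θ - μg, 𝔼[f(θ⁺)] - f(θ*) - μLσ²/(2m) ≤ (1 - μm)(f(θ) - f(θ*) - μLσ²/(2m)). -/
open scoped RealInnerProductSpace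
open intervalIntegral

theorem descent_lemma {d : ℕ} (f : EuclideanSpace ℝ (Fin d) → ℝ)
    (g : EuclideanSpace ℝ (Fin d) → EuclideanSpace ℝ (Fin d)) (L : ℝ) (hL : 0 ≤ L)
    (hgrad : ∀ x, HasGradientAt f (g x) x)
    (hlip : ∀ x y, ‖g x - g y‖ ≤ L * ‖x - y‖)
    (x y : EuclideanSpace ℝ (Fin d)) :
    f y ≤ f x + ⟪g x, y - x⟫ + L / 2 * ‖y - x‖ ^ 2 := by
  set v := y - x with hv
  have hcont : Continuous g := by
    refine (LipschitzWith.of_dist_le_mul (K := ⟨L, hL⟩) (f := g) ?_).continuous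
    intro a b
    rw [dist_eq_norm, dist_eq_norm]; exact hlip a b
  have hderiv : ∀ t : ℝ, HasDerivAt (fun t : ℝ => f (x + t • v)) ⟪g (x + t • v), v⟫ t := by
    intro t
    have hc : HasDerivAt (fun t : ℝ => x + t • v) v t := by
      simpa using ((hasDerivAt_id t).smul_const v).const_add x
    have := ((hgrad (x + t • v)).hasFDerivAt.comp_hasDerivAt t hc)
    simpa [InnerProductSpace.toDual, Function.comp_def] using this
  have hcont2 : Continuous fun t : ℝ => ⟪g (x + t • v), v⟫ := by
    exact (Continuous.inner (hcont.comp (by continuity)) continuous_const)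
  have hFTC : (∫ t in (0:ℝ)..1, ⟪g (x + t • v), v⟫) = f y - f x := by
    have := intervalIntegral.integral_eq_sub_of_hasDerivAt
      (f := fun t : ℝ => f (x + t • v)) (f' := fun t => ⟪g (x + t • v), v⟫)
      (a := 0) (b := 1) (fun t _ => hderiv t)
      (hcont2.intervalIntegrable 0 1)
    simpa [hv] using this
  have hbound : (∫ t in (0:ℝ)..1, (⟪g (x + t • v), v⟫ - ⟪g x, v⟫))
      ≤ ∫ t in (0:ℝ)..1, L * t * ‖v‖ ^ 2 := by
    apply intervalIntegral.integral_mono_on (by norm_num)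
    · exact (hcont2.sub continuous_const).intervalIntegrable 0 1
    · exact (Continuous.intervalIntegrable (by continuity) 0 1)
    · intro t ht
      have h1 : ⟪g (x + t • v), v⟫ - ⟪g x, v⟫ = ⟪g (x + t • v) - g x, v⟫ := by
        rw [inner_sub_left]
      rw [h1]
      calc ⟪g (x + t • v) - g x, v⟫ ≤ ‖g (x + t • v) - g x‖ * ‖v‖ :=
            real_inner_le_norm _ _
        _ ≤ (L * ‖(x + t • v) - x‖) * ‖v‖ := by
            gcongr; exact hlip _ _
        _ = L * t * ‖v‖ ^ 2 := by
            have : ‖(x + t • v) - x‖ = t * ‖v‖ := by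
              simp [norm_smul, abs_of_nonneg ht.1]
            rw [this]; ring
  have hint1 : (∫ t in (0:ℝ)..1, (⟪g (x + t • v), v⟫ - ⟪g x, v⟫))
      = (f y - f x) - ⟪g x, v⟫ := by
    rw [intervalIntegral.integral_sub (hcont2.intervalIntegrable 0 1)
      (intervalIntegrable_const), hFTC]
    simp
  have hint2 : (∫ t in (0:ℝ)..1, L * t * ‖v‖ ^ 2) = L / 2 * ‖v‖ ^ 2 := by
    have : (∫ t in (0:ℝ)..1, L * t * ‖v‖ ^ 2) = (L * ‖v‖ ^ 2) * ∫ t in (0:ℝ)..1, t := by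
      rw [← intervalIntegral.integral_const_mul]
      congr 1; ext t; ring
    rw [this, integral_id]; ring
  rw [hint1, hint2] at hbound
  linarith

open MeasureTheory

theorem stmt_11 {d : ℕ} {Ω : Type*} [MeasurableSpace Ω]
    (P : Measure Ω) [IsProbabilityMeasure P]
    (f : EuclideanSpace ℝ (Fin d) → ℝ)
    (g : EuclideanSpace ℝ (Fin d) → EuclideanSpace ℝ (Fin d))
    (m L σ c : ℝ) (hm : 0 < m) (hL : 0 < L) (hc : 1 ≤ c) (hσ : 0 ≤ σ)
    (hgrad : ∀ x, HasGradientAt f (g x) x)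
    (hstrong : ∀ x y, f y ≥ f x + ⟪g x, y - x⟫ + m / 2 * ‖y - x‖ ^ 2)
    (hlip : ∀ x y, ‖g x - g y‖ ≤ L * ‖x - y‖)
    (θstar : EuclideanSpace ℝ (Fin d)) (hmin : ∀ x, f θstar ≤ f x)
    (θ : EuclideanSpace ℝ (Fin d)) (G : Ω → EuclideanSpace ℝ (Fin d))
    (hGint : Integrable G P)
    (hG2int : Integrable (fun ω => ‖G ω‖ ^ 2) P)
    (η : ℝ) (hη0 : 0 < η) (hη1 : η ≤ 1 / (L * c))
    (hfint : Integrable (fun ω => f (θ - η • G ω)) P)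
    (hmean : (∫ ω, G ω ∂P) = g θ)
    (hsec : (∫ ω, ‖G ω‖ ^ 2 ∂P) ≤ σ ^ 2 + c * ‖g θ‖ ^ 2) :
    (∫ ω, f (θ - η • G ω) ∂P) - f θstar - η * L * σ ^ 2 / (2 * m) ≤
      (1 - η * m) * (f θ - f θstar - η * L * σ ^ 2 / (2 * m)) := by
  -- PL inequality
  have hPL : 2 * m * (f θ - f θstar) ≤ ‖g θ‖ ^ 2 := by
    have h := hstrong θ θstar
    have hcs : ⟪g θ, θstar - θ⟫ ≥ -(‖g θ‖ * ‖θstar - θ‖) := by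
      have := abs_real_inner_le_norm (g θ) (θstar - θ)
      have := neg_abs_le ⟪g θ, θstar - θ⟫
      linarith
    nlinarith [sq_nonneg (‖g θ‖ - m * ‖θstar - θ‖), hm.le]
  -- pointwise descent
  have hpt : ∀ ω, f (θ - η • G ω) ≤ f θ - η * ⟪g θ, G ω⟫ + L / 2 * η^2 * ‖G ω‖ ^ 2 := by
    intro ω
    have h := descent_lemma f g L hL.le hgrad hlip θ (θ - η • G ω)
    have e1 : (θ - η • G ω) - θ = -(η • G ω) := by abel
    rw [e1] at h
    have e2 : ⟪g θ, -(η • G ω)⟫ = -(η * ⟪g θ, G ω⟫) := by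
      rw [inner_neg_right, real_inner_smul_right]
    have e3 : ‖-(η • G ω)‖ ^ 2 = η^2 * ‖G ω‖ ^ 2 := by
      rw [norm_neg, norm_smul]
      simp [abs_of_nonneg hη0.le, mul_pow]
    rw [e2, e3] at h
    linarith
  have hinner_int : Integrable (fun ω => ⟪g θ, G ω⟫) P := hGint.const_inner (g θ)
  -- RHS integrable
  have hrhs_int : Integrable (fun ω => f θ - η * ⟪g θ, G ω⟫ + L / 2 * η^2 * ‖G ω‖ ^ 2) P := by
    exact ((integrable_const _).sub (hinner_int.const_mul η)).add (hG2int.const_mul _)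
  have hmono : (∫ ω, f (θ - η • G ω) ∂P)
      ≤ ∫ ω, (f θ - η * ⟪g θ, G ω⟫ + L / 2 * η^2 * ‖G ω‖ ^ 2) ∂P :=
    integral_mono hfint hrhs_int hpt
  have hA : Integrable (fun ω => f θ - η * ⟪g θ, G ω⟫) P :=
    (integrable_const _).sub (hinner_int.const_mul η)
  have hB : Integrable (fun ω => L / 2 * η^2 * ‖G ω‖ ^ 2) P := hG2int.const_mul _
  have hsplit : (∫ ω, (f θ - η * ⟪g θ, G ω⟫ + L / 2 * η^2 * ‖G ω‖ ^ 2) ∂P)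
      = f θ - η * ‖g θ‖ ^ 2 + L / 2 * η^2 * (∫ ω, ‖G ω‖ ^ 2 ∂P) := by
    rw [integral_add (f := fun ω => f θ - η * ⟪g θ, G ω⟫)
        (g := fun ω => L / 2 * η^2 * ‖G ω‖ ^ 2) hA hB,
      integral_sub (f := fun _ => f θ) (g := fun ω => η * ⟪g θ, G ω⟫)
        (integrable_const _) (hinner_int.const_mul η),
      MeasureTheory.integral_const, MeasureTheory.integral_const_mul, MeasureTheory.integral_const_mul,
      integral_inner hGint, hmean, real_inner_self_eq_norm_sq]
    simp
  rw [hsplit] at hmono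
  -- key expectation bound
  have hI2 : (∫ ω, ‖G ω‖ ^ 2 ∂P) ≤ σ ^ 2 + c * ‖g θ‖ ^ 2 := hsec
  have hLc : L * c * η ≤ 1 := by
    rw [div_eq_mul_inv, one_mul] at hη1
    have hLc0 : 0 < L * c := mul_pos hL (lt_of_lt_of_le one_pos hc)
    calc L * c * η ≤ L * c * (L * c)⁻¹ := by gcongr
      _ = 1 := mul_inv_cancel₀ (ne_of_gt hLc0)
  have hE : (∫ ω, f (θ - η • G ω) ∂P) ≤ f θ - η / 2 * ‖g θ‖ ^ 2 + L / 2 * η^2 * σ ^ 2 := by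
    have hq : L / 2 * η^2 * (c * ‖g θ‖ ^ 2) ≤ η / 2 * ‖g θ‖ ^ 2 := by
      have := mul_nonneg (mul_nonneg hη0.le (sq_nonneg ‖g θ‖)) (sub_nonneg.mpr hLc)
      nlinarith [this]
    have h3 : L / 2 * η^2 * (∫ ω, ‖G ω‖ ^ 2 ∂P) ≤ L / 2 * η^2 * (σ ^ 2 + c * ‖g θ‖ ^ 2) :=
      mul_le_mul_of_nonneg_left hI2 (by positivity)
    nlinarith [hmono, h3]
  have h4 : η / 2 * (2 * m * (f θ - f θstar)) ≤ η / 2 * ‖g θ‖ ^ 2 :=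
    mul_le_mul_of_nonneg_left hPL (by positivity)
  have hA : η * m * (η * L * σ ^ 2 / (2 * m)) = η^2 * L * σ^2 / 2 := by
    field_simp
  nlinarith [hE, h4, hA]
end

section
/- Let n ≥ 2, χ₁ ≥ χ₂ ≥ ... with χₗ > 0, and Δ₁ ≤ Δ₂ ≤ ... with Δₗ ≥ 0, indexed by l ∈ {1,...,n}, where χ₁ = max χₗ and Δ₁ = min Δₗ. Then n ∑ₗ χₗ Δₗ - (∑ₚ χₚ)(∑ₗ Δₗ) ≤ (χ₁ - χ₂) ∑_{l≥2} (Δ₁ - Δₗ) ≤ 0. -/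
theorem stmt_13 {n : ℕ} (hn : 2 ≤ n) (χ Δ : Fin n → ℝ)
    (hχpos : ∀ l, 0 < χ l) (hΔnonneg : ∀ l, 0 ≤ Δ l)
    (hχ : Antitone χ) (hΔ : Monotone Δ) :
    (n : ℝ) * ∑ l, χ l * Δ l - (∑ p, χ p) * (∑ l, Δ l) ≤
      (χ ⟨0, by omega⟩ - χ ⟨1, by omega⟩) *
        ∑ l ∈ Finset.univ.erase ⟨0, by omega⟩, (Δ ⟨0, by omega⟩ - Δ l) ∧
    (χ ⟨0, by omega⟩ - χ ⟨1, by omega⟩) *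
        ∑ l ∈ Finset.univ.erase ⟨0, by omega⟩, (Δ ⟨0, by omega⟩ - Δ l) ≤ 0 := by
  have hn0 : 0 < n := by omega
  have hn1 : 1 < n := by omega
  set z : Fin n := ⟨0, by omega⟩ with hz
  set o : Fin n := ⟨1, by omega⟩ with ho
  set f : Fin n → Fin n → ℝ := fun p l => (χ p - χ l) * (Δ p - Δ l) with hfdef
  have hzo : z ≤ o := by rw [Fin.le_def]; simp [hz, ho]
  have hole : ∀ l : Fin n, l ≠ z → o ≤ l := by
    intro l hl
    have hv : l.val ≠ 0 := by
      intro h; exact hl (Fin.ext h)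
    rw [Fin.le_def]; simp only [ho]; omega
  have hzle : ∀ l : Fin n, z ≤ l := by
    intro l; rw [Fin.le_def]; simp [hz]
  have hf : ∀ p l, f p l ≤ 0 := by
    intro p l
    rcases le_total p l with h | h
    · have h1 := hχ h
      have h2 := hΔ h
      simp only [hfdef]; nlinarith
    · have h1 := hχ h
      have h2 := hΔ h
      simp only [hfdef]; nlinarith
  -- key identity
  have hid : ∑ p, ∑ l, f p l
      = 2 * ((n : ℝ) * ∑ l, χ l * Δ l - (∑ p, χ p) * (∑ l, Δ l)) := by
    simp only [hfdef, sub_mul, mul_sub, Finset.sum_sub_distrib,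
      ← Finset.sum_mul, ← Finset.mul_sum, Finset.sum_const, nsmul_eq_mul,
      Finset.card_univ, Fintype.card_fin, mul_assoc]
    ring
  set T : ℝ := ∑ l ∈ Finset.univ.erase z, f z l with hT
  have hdiag : f z z = 0 := by simp [hfdef]
  have hrow : ∀ p : Fin n, ∑ l, f p l ≤ f p z := by
    intro p
    have := Finset.sum_erase_add Finset.univ (f p) (Finset.mem_univ z)
    have hnp : ∑ l ∈ Finset.univ.erase z, f p l ≤ 0 :=
      Finset.sum_nonpos fun l _ => hf p l
    linarith
  have hkey : ∑ p, ∑ l, f p l ≤ 2 * T := by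
    have hsplit := Finset.sum_erase_add Finset.univ (fun p => ∑ l, f p l)
      (Finset.mem_univ z)
    have h1 : ∑ l, f z l = T := by
      rw [hT, Finset.sum_erase _ hdiag]
    have h2 : ∑ p ∈ Finset.univ.erase z, ∑ l, f p l ≤ T := by
      calc ∑ p ∈ Finset.univ.erase z, ∑ l, f p l
          ≤ ∑ p ∈ Finset.univ.erase z, f p z :=
            Finset.sum_le_sum fun p _ => hrow p
        _ = T := by
            rw [hT]; apply Finset.sum_congr rfl
            intro p _; simp only [hfdef]; ring
    linarith
  have hA : (n : ℝ) * ∑ l, χ l * Δ l - (∑ p, χ p) * (∑ l, Δ l) ≤ T := by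
    linarith [hid ▸ hkey]
  have hTle : T ≤ (χ z - χ o) * ∑ l ∈ Finset.univ.erase z, (Δ z - Δ l) := by
    rw [Finset.mul_sum, hT]
    apply Finset.sum_le_sum
    intro l hl
    have hl' : l ≠ z := Finset.ne_of_mem_erase hl
    have h1 : χ l ≤ χ o := hχ (hole l hl')
    have h2 : Δ z ≤ Δ l := hΔ (hzle l)
    simp only [hfdef]; nlinarith
  have hneg : (χ z - χ o) * ∑ l ∈ Finset.univ.erase z, (Δ z - Δ l) ≤ 0 := by
    apply mul_nonpos_of_nonneg_of_nonpos
    · have := hχ hzo; linarith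
    · exact Finset.sum_nonpos fun l hl => by
        have := hΔ (hzle l); linarith
  exact ⟨le_trans hA hTle, hneg⟩
end

section
/- Let f : ℝ^d → ℝ be convex with minimizer θ*, let θ̂₁,...,θ̂ₙ ∈ ℝ^d, and set rₗ = f(θ̂ₗ) and assume rₗ > f(θ*) ≥ 0 for all l. Suppose rₗ and Δₗ := rₗ - f(θ*) are such that the weights aₗ = rₗ⁻¹/∑ₚ rₚ⁻¹ are used to aggregate: θ = ∑ₗ aₗ θ̂ₗ. Then f(θ) - f(θ*) ≤ (1/n) ∑ₗ (f(θ̂ₗ) - f(θ*)). -/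
theorem stmt_14 {d n : ℕ} (hn : 0 < n) (f : EuclideanSpace ℝ (Fin d) → ℝ)
    (hf : ConvexOn ℝ Set.univ f)
    (θstar : EuclideanSpace ℝ (Fin d)) (hmin : ∀ x, f θstar ≤ f x)
    (hfstar : 0 ≤ f θstar)
    (θhat : Fin n → EuclideanSpace ℝ (Fin d))
    (hr : ∀ l, f θstar < f (θhat l)) :
    f (∑ l, ((f (θhat l))⁻¹ / ∑ p, (f (θhat p))⁻¹) • θhat l) - f θstar ≤
      (1 / (n : ℝ)) * ∑ l, (f (θhat l) - f θstar) := by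
  set r : Fin n → ℝ := fun l => f (θhat l) with hrdef
  have hrpos : ∀ l, 0 < r l := fun l => lt_of_le_of_lt hfstar (hr l)
  have hne : (Finset.univ : Finset (Fin n)).Nonempty := by
    simpa [Finset.univ_nonempty_iff] using Fin.pos_iff_nonempty.mp hn
  set S : ℝ := ∑ p, (r p)⁻¹ with hSdef
  have hS : 0 < S :=
    Finset.sum_pos (fun l _ => inv_pos.mpr (hrpos l)) hne
  have hw0 : ∀ l ∈ Finset.univ, (0:ℝ) ≤ (r l)⁻¹ / S :=
    fun l _ => div_nonneg (inv_pos.mpr (hrpos l)).le hS.le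
  have hw1 : ∑ l, (r l)⁻¹ / S = 1 := by
    rw [← Finset.sum_div, ← hSdef, div_self hS.ne']
  -- Jensen
  have hjensen : f (∑ l, ((r l)⁻¹ / S) • θhat l) ≤ ∑ l, ((r l)⁻¹ / S) * r l :=
    hf.map_sum_le hw0 hw1 (fun l _ => Set.mem_univ _)
  have hsum : ∑ l, ((r l)⁻¹ / S) * r l = n / S := by
    have : ∀ l : Fin n, ((r l)⁻¹ / S) * r l = 1 / S := by
      intro l
      rw [div_mul_eq_mul_div, inv_mul_cancel₀ (hrpos l).ne']
    rw [Finset.sum_congr rfl (fun l _ => this l)]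
    simp [Finset.sum_const, div_eq_mul_inv]
  -- Cauchy-Schwarz / AM-HM : n^2 ≤ S * ∑ r
  have hcs : (n:ℝ) * n ≤ S * ∑ l, r l := by
    have h := Finset.sum_sq_le_sum_mul_sum_of_sq_eq_mul Finset.univ
      (r := fun _ : Fin n => (1:ℝ)) (f := fun l => (r l)⁻¹) (g := r)
      (fun l _ => (inv_pos.mpr (hrpos l)).le) (fun l _ => (hrpos l).le)
      (fun l _ => by simp [inv_mul_cancel₀ (hrpos l).ne'])
    simpa [sq, ← hSdef] using h
  have hn' : (0:ℝ) < n := Nat.cast_pos.mpr hn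
  have hstep : (n:ℝ) / S ≤ (1 / n) * ∑ l, r l := by
    rw [div_le_iff₀ hS, one_div, inv_mul_eq_div, div_mul_eq_mul_div,
      le_div_iff₀ hn']
    nlinarith [hcs]
  have hfinal : f (∑ l, ((r l)⁻¹ / S) • θhat l) ≤ (1 / n) * ∑ l, r l :=
    le_trans (hjensen.trans_eq hsum) hstep
  have : (1 / (n:ℝ)) * ∑ l, (r l - f θstar) = (1/n) * ∑ l, r l - f θstar := by
    rw [Finset.sum_sub_distrib]
    simp [Finset.sum_const]
    field_simp
  simp only [hrdef] at this hfinal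
  rw [show (∑ l, (f (θhat l) - f θstar)) = ∑ l, ((fun l => f (θhat l)) l - f θstar) from rfl, this]
  linarith [hfinal]
end
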